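/- For any bialgebra B, the vector space twi(B) of solutions ξ ∈ B⊗B of (Δ⊗id)ξ + ξ⊗1 = (id⊗Δ)ξ + 1⊗ξ, modulo the equivalence ξ ∼ ξ + Δ(γ) − 1⊗γ − γ⊗1 for γ ∈ B, is isomorphic to the second cohomology group H²(Ω(B)) of the cobar construction of the coalgebra underlying B. -/

import Mathlib

open TensorProduct Coalgebra

section Prelude

variable (R : Type*) [CommRing R]
variable (B : Type*) [Ring B] [Bialgebra R B]
variable (A : Type*) [Ring A] [Algebra R A]

/-- The action of `B ⊗ B` on `A ⊗ A` induced by a representation `ρ : B → End A`. -/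
noncomputable def act2 (ρ : B →ₐ[R] Module.End R A) :
    B ⊗[R] B →ₗ[R] (A ⊗[R] A) →ₗ[R] A ⊗[R] A :=
  TensorProduct.homTensorHomMap (RingHom.id R) A A A A ∘ₗ TensorProduct.map ρ.toLinearMap ρ.toLinearMap

/-- `A` is a left `B`-module algebra via `ρ`: the multiplication of `A` is `B`-linear
(with respect to the diagonal action on `A ⊗ A`), and `b • 1 = ε(b) • 1`. -/
def IsModuleAlgebra (ρ : B →ₐ[R] Module.End R A) : Prop :=
  (∀ b : B, (ρ b) ∘ₗ LinearMap.mul' R A =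
      LinearMap.mul' R A ∘ₗ act2 R B A ρ (Coalgebra.comul b)) ∧
  (∀ b : B, ρ b 1 = Coalgebra.counit (R := R) b • (1 : A))

/-- `F ∈ B ⊗ B` is a twisting element: `[(Δ⊗id)F](F⊗1) = [(id⊗Δ)F](1⊗F)` and
`(ε⊗id)F = 1 = (id⊗ε)F`. -/
def IsTwisting (F : B ⊗[R] B) : Prop :=
  (TensorProduct.map Coalgebra.comul LinearMap.id F) * (F ⊗ₜ[R] (1 : B)) =
    (TensorProduct.assoc R B B B).symm
      ((TensorProduct.map LinearMap.id Coalgebra.comul F) * ((1 : B) ⊗ₜ[R] F)) ∧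
  TensorProduct.lid R B (TensorProduct.map Coalgebra.counit LinearMap.id F) = 1 ∧
  TensorProduct.rid R B (TensorProduct.map LinearMap.id Coalgebra.counit F) = 1

/-- The multiplication twisted by `F`: `a * b := μ_A (F (a ⊗ b))`. -/
noncomputable def twMul (ρ : B →ₐ[R] Module.End R A) (F : B ⊗[R] B) (a b : A) : A :=
  LinearMap.mul' R A (act2 R B A ρ F (a ⊗ₜ[R] b))

end Prelude

section LogTwist

variable (k : Type*) [CommRing k]
variable (B : Type*) [Ring B] [Bialgebra k B]

/-- The map `x ↦ x ⊗ 1`. -/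
noncomputable def rUnit : B →ₗ[k] B ⊗[k] B := (TensorProduct.mk k B B).flip 1

/-- The map `x ↦ 1 ⊗ x`. -/
noncomputable def lUnit : B →ₗ[k] B ⊗[k] B := TensorProduct.mk k B B 1

/-- The 'logarithmic' twisting equation `(Δ⊗id)f + f⊗1 = (id⊗Δ)f + 1⊗f` in `B⊗B⊗B`. -/
def LogTwistEq (f : B ⊗[k] B) : Prop :=
  TensorProduct.map Coalgebra.comul LinearMap.id f + f ⊗ₜ[k] (1 : B) =
    (TensorProduct.assoc k B B B).symm
      (TensorProduct.map LinearMap.id Coalgebra.comul f + (1 : B) ⊗ₜ[k] f)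

/-- The reduced coproduct `Δ̄(u) = Δ(u) − u⊗1 − 1⊗u`, as a map on all of `B`. -/
noncomputable def redComul : B →ₗ[k] B ⊗[k] B :=
  Coalgebra.comul - rUnit k B - lUnit k B

/-- The coaugmentation coideal `B̄ = ker ε`. -/
noncomputable def kerCounit : Submodule k B :=
  LinearMap.ker (Coalgebra.counit (R := k) (A := B))

end LogTwist

section Stmt10

variable (k : Type*) [CommRing k] (B : Type*) [Ring B] [Bialgebra k B]

/-- The linear map whose kernel consists of the solutions of
`(Δ⊗id)ξ + ξ⊗1 = (id⊗Δ)ξ + 1⊗ξ`. -/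
noncomputable def logTwistMap : B ⊗[k] B →ₗ[k] (B ⊗[k] B) ⊗[k] B :=
  (TensorProduct.map Coalgebra.comul LinearMap.id
      + (TensorProduct.mk k (B ⊗[k] B) B).flip 1)
    - ((TensorProduct.assoc k B B B).symm.toLinearMap ∘ₗ
        (TensorProduct.map LinearMap.id Coalgebra.comul + TensorProduct.mk k B (B ⊗[k] B) 1))

/-- The submodule of solutions of the logarithmic twisting equation. -/
noncomputable def twiCocycles : Submodule k (B ⊗[k] B) := LinearMap.ker (logTwistMap k B)

/-- The submodule of coboundaries `{Δ(γ) − 1⊗γ − γ⊗1 : γ ∈ B}`. -/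
noncomputable def twiCoboundaries : Submodule k (B ⊗[k] B) := LinearMap.range (redComul k B)

/-- The moduli space `twi(B)`: solutions modulo the equivalence
`ξ ∼ ξ + Δ(γ) − 1⊗γ − γ⊗1`. -/
noncomputable abbrev twi :=
  twiCocycles k B ⧸ ((twiCoboundaries k B).comap (twiCocycles k B).subtype)

/-- The degree-2 differential of the cobar construction (on the ambient space `B⊗B`):
`d₂ = Δ̄⊗id − id⊗Δ̄`. -/
noncomputable def cobarD2 : B ⊗[k] B →ₗ[k] (B ⊗[k] B) ⊗[k] B :=
  TensorProduct.map (redComul k B) LinearMap.id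
    - ((TensorProduct.assoc k B B B).symm.toLinearMap ∘ₗ
        TensorProduct.map LinearMap.id (redComul k B))

/-- Degree-2 cocycles of the cobar construction: elements of `B̄⊗B̄` killed by `d₂`. -/
noncomputable def cobarZ2 : Submodule k (B ⊗[k] B) :=
  LinearMap.range (TensorProduct.map (kerCounit k B).subtype (kerCounit k B).subtype) ⊓
    LinearMap.ker (cobarD2 k B)

/-- Degree-2 coboundaries of the cobar construction: the image of `d₁ = Δ̄ : B̄ → B̄⊗B̄`. -/
noncomputable def cobarB2 : Submodule k (B ⊗[k] B) :=
  LinearMap.range ((redComul k B) ∘ₗ (kerCounit k B).subtype)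

/-- The second cohomology group `H²(Ω(B))` of the cobar construction. -/
noncomputable abbrev cobarH2 :=
  cobarZ2 k B ⧸ ((cobarB2 k B).comap (cobarZ2 k B).subtype)


section Aux

open LinearMap

variable (k : Type*) [CommRing k] (B : Type*) [Ring B] [Bialgebra k B]

lemma logTwistMap_eq_cobarD2 : logTwistMap k B = cobarD2 k B := by
  apply TensorProduct.ext'
  intro x y
  simp only [logTwistMap, cobarD2, redComul, rUnit, lUnit, LinearMap.sub_apply,
    LinearMap.add_apply, LinearMap.coe_comp, Function.comp_apply, LinearEquiv.coe_coe,
    TensorProduct.map_tmul, TensorProduct.mk_apply, LinearMap.flip_apply,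
    LinearMap.id_coe, id_eq, TensorProduct.sub_tmul, TensorProduct.tmul_sub, map_sub, map_add,
    TensorProduct.assoc_symm_tmul]
  abel

@[simp] lemma rUnit_apply (x : B) : rUnit k B x = x ⊗ₜ[k] (1:B) := rfl
@[simp] lemma lUnit_apply (x : B) : lUnit k B x = (1:B) ⊗ₜ[k] x := rfl

lemma assoc_symm_one_tmul (z : B ⊗[k] B) :
    (TensorProduct.assoc k B B B).symm ((1:B) ⊗ₜ[k] z) = (lUnit k B).rTensor B z := by
  induction z using TensorProduct.induction_on with
  | zero => rw [tmul_zero, LinearEquiv.map_zero, map_zero]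
  | tmul x y => simp [lUnit, TensorProduct.assoc_symm_tmul]
  | add a b ha hb => simp only [tmul_add, map_add, ha, hb]

lemma assoc_symm_lTensor_lUnit (z : B ⊗[k] B) :
    (TensorProduct.assoc k B B B).symm ((lUnit k B).lTensor B z) = (rUnit k B).rTensor B z := by
  induction z using TensorProduct.induction_on with
  | zero => simp
  | tmul x y => simp [lUnit, rUnit, TensorProduct.assoc_symm_tmul]
  | add a b ha hb => simp only [map_add, ha, hb]

lemma assoc_symm_lTensor_rUnit (z : B ⊗[k] B) :
    (TensorProduct.assoc k B B B).symm ((rUnit k B).lTensor B z) = z ⊗ₜ[k] (1:B) := by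
  induction z using TensorProduct.induction_on with
  | zero => simp
  | tmul x y => simp [rUnit, TensorProduct.assoc_symm_tmul]
  | add a b ha hb => simp only [map_add, ha, hb, add_tmul]

lemma cobarD2_redComul (γ : B) : cobarD2 k B (redComul k B γ) = 0 := by
  have hr : TensorProduct.map (redComul k B) (LinearMap.id) = (redComul k B).rTensor B := rfl
  have hl : TensorProduct.map (LinearMap.id) (redComul k B) = (redComul k B).lTensor B := rfl
  have hone : Coalgebra.comul (R := k) (1 : B) = (1:B) ⊗ₜ[k] (1:B) := by
    rw [Bialgebra.comul_one]; rfl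
  simp only [cobarD2, hr, hl, LinearMap.sub_apply, LinearMap.coe_comp, Function.comp_apply,
    LinearEquiv.coe_coe]
  rw [redComul]
  simp only [rTensor_sub, lTensor_sub, LinearMap.sub_apply, map_sub,
    rUnit_apply, lUnit_apply, rTensor_tmul, lTensor_tmul, TensorProduct.mk_apply, flip_apply,
    LinearMap.id_coe, id_eq, hone, TensorProduct.sub_tmul, TensorProduct.tmul_sub,
    TensorProduct.assoc_symm_tmul, Coalgebra.coassoc_symm_apply,
    assoc_symm_one_tmul, assoc_symm_lTensor_lUnit, assoc_symm_lTensor_rUnit]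
  abel

/-- `ε ⊗ ε` as a map to `k`. -/
noncomputable def epseps : B ⊗[k] B →ₗ[k] k :=
  (TensorProduct.lid k k).toLinearMap ∘ₗ
    TensorProduct.map (Coalgebra.counit (R := k)) (Coalgebra.counit (R := k))

@[simp] lemma epseps_tmul (x y : B) :
    epseps k B (x ⊗ₜ[k] y) = Coalgebra.counit (R := k) x * Coalgebra.counit (R := k) y := by
  simp [epseps, smul_eq_mul]

/-- `(ε ⊗ id)` as a map `B ⊗ B → B`. -/
noncomputable def uMap : B ⊗[k] B →ₗ[k] B :=
  (TensorProduct.lid k B).toLinearMap ∘ₗ (Coalgebra.counit (R := k) (A := B)).rTensor B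

/-- `(id ⊗ ε)` as a map `B ⊗ B → B`. -/
noncomputable def vMap : B ⊗[k] B →ₗ[k] B :=
  (TensorProduct.rid k B).toLinearMap ∘ₗ (Coalgebra.counit (R := k) (A := B)).lTensor B

@[simp] lemma uMap_tmul (x y : B) : uMap k B (x ⊗ₜ[k] y) = Coalgebra.counit (R := k) x • y := by
  simp [uMap]

@[simp] lemma vMap_tmul (x y : B) : vMap k B (x ⊗ₜ[k] y) = Coalgebra.counit (R := k) y • x := by
  simp [vMap]

@[simp] lemma uMap_comul (x : B) : uMap k B (Coalgebra.comul x) = x := by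
  simp [uMap]

@[simp] lemma vMap_comul (x : B) : vMap k B (Coalgebra.comul x) = x := by
  simp [vMap]

lemma epseps_eq (z : B ⊗[k] B) : epseps k B z = Coalgebra.counit (R := k) (uMap k B z) := by
  induction z using TensorProduct.induction_on with
  | zero => simp
  | tmul x y => simp [smul_eq_mul]
  | add a b ha hb => simp [ha, hb]

@[simp] lemma epseps_comul (x : B) :
    epseps k B (Coalgebra.comul x) = Coalgebra.counit (R := k) x := by
  rw [epseps_eq, uMap_comul]

/-- `(ε ⊗ ε ⊗ id)` on `(B ⊗ B) ⊗ B`. -/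
noncomputable def phiMap : (B ⊗[k] B) ⊗[k] B →ₗ[k] B :=
  (TensorProduct.lid k B).toLinearMap ∘ₗ (epseps k B).rTensor B

/-- `(id ⊗ ε ⊗ ε)` on `(B ⊗ B) ⊗ B`. -/
noncomputable def thetaMap : (B ⊗[k] B) ⊗[k] B →ₗ[k] B :=
  vMap k B ∘ₗ (vMap k B).rTensor B

@[simp] lemma phiMap_tmul (w : B ⊗[k] B) (z : B) :
    phiMap k B (w ⊗ₜ[k] z) = epseps k B w • z := by
  simp [phiMap]

@[simp] lemma thetaMap_tmul (w : B ⊗[k] B) (z : B) :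
    thetaMap k B (w ⊗ₜ[k] z) = Coalgebra.counit (R := k) z • vMap k B w := by
  simp [thetaMap]

lemma phiMap_assoc_symm (x : B) (w : B ⊗[k] B) :
    phiMap k B ((TensorProduct.assoc k B B B).symm (x ⊗ₜ[k] w)) =
      Coalgebra.counit (R := k) x • uMap k B w := by
  induction w using TensorProduct.induction_on with
  | zero => rw [tmul_zero, LinearEquiv.map_zero]; simp
  | tmul y z => simp [TensorProduct.assoc_symm_tmul, mul_smul]
  | add a b ha hb => simp [tmul_add, ha, hb, smul_add]

lemma thetaMap_assoc_symm (x : B) (w : B ⊗[k] B) :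
    thetaMap k B ((TensorProduct.assoc k B B B).symm (x ⊗ₜ[k] w)) =
      epseps k B w • x := by
  induction w using TensorProduct.induction_on with
  | zero => rw [tmul_zero, LinearEquiv.map_zero]; simp
  | tmul y z =>
      simp [TensorProduct.assoc_symm_tmul, smul_smul, mul_comm]
  | add a b ha hb => simp [tmul_add, ha, hb, add_smul]

lemma norm_of_cocycle {ξ : B ⊗[k] B} (hξ : logTwistMap k B ξ = 0) :
    uMap k B ξ = epseps k B ξ • (1:B) ∧ vMap k B ξ = epseps k B ξ • (1:B) := by
  have heq : TensorProduct.map (Coalgebra.comul (R:=k)) LinearMap.id ξ + ξ ⊗ₜ[k] (1:B) =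
      (TensorProduct.assoc k B B B).symm
        (TensorProduct.map LinearMap.id (Coalgebra.comul (R:=k)) ξ + (1:B) ⊗ₜ[k] ξ) := by
    have h := hξ
    simp only [logTwistMap, LinearMap.sub_apply, LinearMap.add_apply, LinearMap.coe_comp,
      Function.comp_apply, LinearEquiv.coe_coe, TensorProduct.mk_apply,
      LinearMap.flip_apply] at h
    rwa [sub_eq_zero] at h
  obtain ⟨S, hS⟩ := TensorProduct.exists_finset (R := k) ξ
  have hA : phiMap k B (TensorProduct.map (Coalgebra.comul (R:=k)) LinearMap.id ξ)
      = uMap k B ξ := by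
    conv_lhs => rw [hS]
    conv_rhs => rw [hS]
    simp [map_sum]
  have hB : phiMap k B (ξ ⊗ₜ[k] (1:B)) = epseps k B ξ • (1:B) := by simp
  have hC1 : phiMap k B ((TensorProduct.assoc k B B B).symm
      (TensorProduct.map LinearMap.id (Coalgebra.comul (R:=k)) ξ)) = uMap k B ξ := by
    conv_lhs => rw [hS]
    conv_rhs => rw [hS]
    simp [map_sum, phiMap_assoc_symm]
  have hC2 : phiMap k B ((TensorProduct.assoc k B B B).symm ((1:B) ⊗ₜ[k] ξ)) = uMap k B ξ := by
    rw [phiMap_assoc_symm]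
    simp [Bialgebra.counit_one]
  have hA' : thetaMap k B (TensorProduct.map (Coalgebra.comul (R:=k)) LinearMap.id ξ)
      = vMap k B ξ := by
    conv_lhs => rw [hS]
    conv_rhs => rw [hS]
    simp [map_sum]
  have hB' : thetaMap k B (ξ ⊗ₜ[k] (1:B)) = vMap k B ξ := by
    simp [Bialgebra.counit_one]
  have hC1' : thetaMap k B ((TensorProduct.assoc k B B B).symm
      (TensorProduct.map LinearMap.id (Coalgebra.comul (R:=k)) ξ)) = vMap k B ξ := by
    conv_lhs => rw [hS]
    conv_rhs => rw [hS]
    simp [map_sum, thetaMap_assoc_symm]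
  have hC2' : thetaMap k B ((TensorProduct.assoc k B B B).symm ((1:B) ⊗ₜ[k] ξ))
      = epseps k B ξ • (1:B) := by
    rw [thetaMap_assoc_symm]
  constructor
  · have h1 := congrArg (phiMap k B) heq
    rw [map_add, LinearEquiv.map_add, map_add, hA, hB, hC1, hC2] at h1
    exact (add_left_cancel h1).symm
  · have h2 := congrArg (thetaMap k B) heq
    rw [map_add, LinearEquiv.map_add, map_add, hA', hB', hC1', hC2'] at h2
    exact add_left_cancel h2

/-- The projection `π(x) = x - ε(x)•1` onto the coaugmentation coideal. -/
noncomputable def piMap : B →ₗ[k] B :=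
  LinearMap.id - (LinearMap.toSpanSingleton k B 1) ∘ₗ (Coalgebra.counit (R := k))

@[simp] lemma piMap_apply (x : B) :
    piMap k B x = x - Coalgebra.counit (R := k) x • (1:B) := rfl

lemma counit_piMap (x : B) : Coalgebra.counit (R := k) (piMap k B x) = 0 := by
  simp [Bialgebra.counit_one]

/-- `π` with codomain restricted to `B̄`. -/
noncomputable def piBar : B →ₗ[k] ↥(kerCounit k B) :=
  (piMap k B).codRestrict (kerCounit k B) (fun x => by
    simp only [kerCounit, LinearMap.mem_ker]; exact counit_piMap k B x)

lemma subtype_comp_piBar : (kerCounit k B).subtype ∘ₗ piBar k B = piMap k B := rfl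

lemma map_piMap_piMap_eq :
    TensorProduct.map (piMap k B) (piMap k B) =
      LinearMap.id - (TensorProduct.mk k B B 1) ∘ₗ uMap k B
        - ((TensorProduct.mk k B B).flip 1) ∘ₗ vMap k B
        + (LinearMap.toSpanSingleton k (B ⊗[k] B) ((1:B) ⊗ₜ[k] (1:B))) ∘ₗ epseps k B := by
  apply TensorProduct.ext'
  intro x y
  simp only [TensorProduct.map_tmul, piMap_apply, LinearMap.add_apply, LinearMap.sub_apply,
    LinearMap.coe_comp, Function.comp_apply, LinearMap.id_coe, id_eq, TensorProduct.mk_apply,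
    LinearMap.flip_apply, uMap_tmul, vMap_tmul, epseps_tmul,
    LinearMap.toSpanSingleton_apply, TensorProduct.sub_tmul, TensorProduct.tmul_sub,
    TensorProduct.tmul_smul, TensorProduct.smul_tmul', mul_smul]
  simp only [smul_add, smul_sub, smul_smul, TensorProduct.smul_tmul', neg_smul, one_smul,
    mul_comm]
  abel

lemma map_piMap_piMap_apply (ξ : B ⊗[k] B) :
    TensorProduct.map (piMap k B) (piMap k B) ξ =
      ξ - (1:B) ⊗ₜ[k] uMap k B ξ - vMap k B ξ ⊗ₜ[k] (1:B)
        + epseps k B ξ • ((1:B) ⊗ₜ[k] (1:B)) := by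
  rw [map_piMap_piMap_eq]
  rfl

lemma map_piMap_mem_range (ξ : B ⊗[k] B) :
    TensorProduct.map (piMap k B) (piMap k B) ξ ∈
      LinearMap.range (TensorProduct.map (kerCounit k B).subtype (kerCounit k B).subtype) := by
  refine ⟨TensorProduct.map (piBar k B) (piBar k B) ξ, ?_⟩
  rw [← LinearMap.comp_apply, ← TensorProduct.map_comp, subtype_comp_piBar]

lemma epseps_eq_zero_of_mem {ξ : B ⊗[k] B}
    (h : ξ ∈ LinearMap.range
      (TensorProduct.map (kerCounit k B).subtype (kerCounit k B).subtype)) :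
    epseps k B ξ = 0 := by
  obtain ⟨w, rfl⟩ := h
  induction w using TensorProduct.induction_on with
  | zero => simp
  | tmul a b =>
      have ha : Coalgebra.counit (R := k) (a:B) = 0 := a.2
      simp [ha]
  | add a b ha hb => simp [ha, hb]

lemma redComul_apply (x : B) :
    redComul k B x = Coalgebra.comul (R := k) x - x ⊗ₜ[k] (1:B) - (1:B) ⊗ₜ[k] x := by
  simp [redComul]

lemma redComul_one : redComul k B (1:B) = -((1:B) ⊗ₜ[k] (1:B)) := by
  rw [redComul_apply, Bialgebra.comul_one, Algebra.TensorProduct.one_def]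
  abel

lemma uMap_redComul (γ : B) :
    uMap k B (redComul k B γ) = -(Coalgebra.counit (R := k) γ • (1:B)) := by
  simp [redComul_apply, Bialgebra.counit_one]

lemma vMap_redComul (γ : B) :
    vMap k B (redComul k B γ) = -(Coalgebra.counit (R := k) γ • (1:B)) := by
  simp [redComul_apply, Bialgebra.counit_one]

lemma epseps_redComul (γ : B) :
    epseps k B (redComul k B γ) = -(Coalgebra.counit (R := k) γ) := by
  simp [redComul_apply, Bialgebra.counit_one]

lemma redComul_mem_range {γ : B} (hγ : Coalgebra.counit (R := k) γ = 0) :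
    redComul k B γ ∈ LinearMap.range
      (TensorProduct.map (kerCounit k B).subtype (kerCounit k B).subtype) := by
  have h : TensorProduct.map (piMap k B) (piMap k B) (redComul k B γ) = redComul k B γ := by
    rw [map_piMap_piMap_apply, uMap_redComul, vMap_redComul, epseps_redComul, hγ]
    simp
  rw [← h]
  exact map_piMap_mem_range k B _

lemma redComul_mem_twiCocycles (γ : B) : redComul k B γ ∈ twiCocycles k B := by
  simp only [twiCocycles, LinearMap.mem_ker, logTwistMap_eq_cobarD2]
  exact cobarD2_redComul k B γ

lemma B2_le_Z2 : cobarB2 k B ≤ cobarZ2 k B := by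
  rintro _ ⟨⟨γ, hγ⟩, rfl⟩
  refine Submodule.mem_inf.2 ⟨redComul_mem_range k B hγ, ?_⟩
  simpa using cobarD2_redComul k B γ

lemma B2_le_D : cobarB2 k B ≤ twiCoboundaries k B := by
  rintro _ ⟨γ, rfl⟩
  exact ⟨(kerCounit k B).subtype γ, rfl⟩

lemma inf_eq_B2 : cobarZ2 k B ⊓ twiCoboundaries k B = cobarB2 k B := by
  refine le_antisymm ?_ (le_inf (B2_le_Z2 k B) (B2_le_D k B))
  rintro ξ ⟨hz, hd⟩
  obtain ⟨γ, rfl⟩ := hd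
  have h0 : epseps k B (redComul k B γ) = 0 :=
    epseps_eq_zero_of_mem k B (Submodule.mem_inf.1 hz).1
  rw [epseps_redComul, neg_eq_zero] at h0
  exact ⟨⟨γ, h0⟩, rfl⟩

lemma sup_eq_Z : cobarZ2 k B ⊔ twiCoboundaries k B = twiCocycles k B := by
  refine le_antisymm (sup_le ?_ ?_) ?_
  · intro ξ hξ
    have h := (Submodule.mem_inf.1 hξ).2
    simp only [LinearMap.mem_ker] at h
    simp only [twiCocycles, LinearMap.mem_ker, logTwistMap_eq_cobarD2]
    exact h
  · rintro _ ⟨γ, rfl⟩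
    exact redComul_mem_twiCocycles k B γ
  · intro ξ hξ
    have hξ' : logTwistMap k B ξ = 0 := hξ
    obtain ⟨hu, hv⟩ := norm_of_cocycle k B hξ'
    have hdecomp : TensorProduct.map (piMap k B) (piMap k B) ξ
        = ξ - redComul k B (-(epseps k B ξ • (1:B))) := by
      rw [map_piMap_piMap_apply, hu, hv, map_neg, map_smul, redComul_one]
      rw [TensorProduct.tmul_smul, TensorProduct.smul_tmul']
      abel_nf
      simp [TensorProduct.tmul_smul]
      abel
    have h1 : TensorProduct.map (piMap k B) (piMap k B) ξ ∈ cobarZ2 k B := by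
      refine Submodule.mem_inf.2 ⟨map_piMap_mem_range k B ξ, ?_⟩
      simp only [LinearMap.mem_ker, hdecomp, map_sub]
      rw [cobarD2_redComul, ← logTwistMap_eq_cobarD2, hξ', sub_zero]
    have h2 : redComul k B (-(epseps k B ξ • (1:B))) ∈ twiCoboundaries k B :=
      ⟨_, rfl⟩
    have : ξ = TensorProduct.map (piMap k B) (piMap k B) ξ
        + redComul k B (-(epseps k B ξ • (1:B))) := by
      rw [hdecomp]; abel
    rw [this]
    exact Submodule.add_mem_sup h1 h2

end Aux

/-- For any bialgebra `B`, `twi(B) ≅ H²(Ω(B))`. -/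
theorem twi_iso_cobar_H2
    (k : Type*) [Field k] [CharZero k] (B : Type*) [Ring B] [Bialgebra k B] :
    Nonempty (twi k B ≃ₗ[k] cobarH2 k B) := by
  refine ⟨?_⟩
  let e : ↥(cobarZ2 k B ⊔ twiCoboundaries k B) ≃ₗ[k] ↥(twiCocycles k B) :=
    LinearEquiv.ofEq _ _ (sup_eq_Z k B)
  have hcoe : ∀ y, ((e y : ↥(twiCocycles k B)) : B ⊗[k] B) = (y : B ⊗[k] B) := fun y => rfl
  have hcoe2 : ∀ y, ((e.symm y : ↥(cobarZ2 k B ⊔ twiCoboundaries k B)) : B ⊗[k] B)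
      = (y : B ⊗[k] B) := fun y => rfl
  have hmap : (Submodule.comap (cobarZ2 k B ⊔ twiCoboundaries k B).subtype
        (twiCoboundaries k B)).map (e : _ →ₗ[k] _)
      = Submodule.comap (twiCocycles k B).subtype (twiCoboundaries k B) := by
    ext x
    constructor
    · rintro ⟨y, hy, rfl⟩
      simpa [Submodule.mem_comap, hcoe] using hy
    · intro hx
      refine ⟨e.symm x, ?_, by simp⟩
      simpa [Submodule.mem_comap, hcoe2] using hx
  have q1 : (↥(cobarZ2 k B ⊔ twiCoboundaries k B) ⧸
        Submodule.comap (cobarZ2 k B ⊔ twiCoboundaries k B).subtype (twiCoboundaries k B))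
      ≃ₗ[k] twi k B :=
    Submodule.Quotient.equiv _ _ e hmap
  have q2 := LinearMap.quotientInfEquivSupQuotient (cobarZ2 k B) (twiCoboundaries k B)
  have q3 : (↥(cobarZ2 k B) ⧸ Submodule.comap (cobarZ2 k B).subtype
        (cobarZ2 k B ⊓ twiCoboundaries k B)) ≃ₗ[k] cobarH2 k B :=
    Submodule.quotEquivOfEq _ _
      (congrArg (Submodule.comap (cobarZ2 k B).subtype) (inf_eq_B2 k B))
  exact q1.symm ≪≫ₗ q2.symm ≪≫ₗ q3

end Stmt10
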